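/- Let k be any field and let A ∈ 𝒞(k). Then exactly one of the following three alternatives holds: (a) A is not associative; (b) A is associative, non-commutative, and its center equals k·1; (c) A is commutative and associative. Moreover, A is not associative if and only if the right nucleus N_r(A) has dimension 2 over k. -/
import Mathlib


open Module Function

variable {k : Type} [Field k]

/-- A Kleinian pair for a nonassociative `k`-algebra `(A, mul)`: a pair of distinct commuting
automorphisms, each of order 2. -/
def IsKleinPair {A : Type} [AddCommGroup A] [Module k A]
    (mul : A →ₗ[k] A →ₗ[k] A) (α β : A ≃ₗ[k] A) : Prop :=
  (∀ x y : A, α (mul x y) = mul (α x) (α y)) ∧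
  (∀ x y : A, β (mul x y) = mul (β x) (β y)) ∧
  (∀ x : A, α (α x) = x) ∧ (∀ x : A, β (β x) = x) ∧
  (∀ x : A, α (β x) = β (α x)) ∧
  α ≠ LinearEquiv.refl k A ∧ β ≠ LinearEquiv.refl k A ∧ α ≠ β

/-- The right nucleus `N_r(A)` as a `k`-subspace of `A`. -/
def rightNucleusSub {A : Type} [AddCommGroup A] [Module k A]
    (mul : A →ₗ[k] A →ₗ[k] A) : Submodule k A where
  carrier := {z | ∀ x y : A, mul (mul x y) z = mul x (mul y z)}
  add_mem' := by
    intro a b ha hb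
    intro x y
    simp only [map_add]
    rw [ha x y, hb x y]
  zero_mem' := by
    intro x y
    simp only [map_zero]
  smul_mem' := by
    intro t z hz
    intro x y
    simp only [map_smul]
    rw [hz x y]

section Aux

variable {A : Type} [AddCommGroup A] [Module k A]
variable {mul : A →ₗ[k] A →ₗ[k] A} {one : A}

lemma mem_rns {z : A} (mul : A →ₗ[k] A →ₗ[k] A) :
    z ∈ rightNucleusSub mul ↔ ∀ x y : A, mul (mul x y) z = mul x (mul y z) := Iff.rfl

lemma rns_mul_mem {z w : A} (hz : z ∈ rightNucleusSub mul) (hw : w ∈ rightNucleusSub mul) :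
    mul z w ∈ rightNucleusSub mul := by
  intro x y
  calc mul (mul x y) (mul z w) = mul (mul (mul x y) z) w := (hw (mul x y) z).symm
    _ = mul (mul x (mul y z)) w := by rw [hz x y]
    _ = mul x (mul (mul y z) w) := hw x (mul y z)
    _ = mul x (mul y (mul z w)) := by rw [hw y z]

lemma rns_inv (hone : ∀ x : A, mul one x = x ∧ mul x one = x)
    (hdiv : ∀ a : A, a ≠ 0 →
      Function.Bijective (fun x => mul a x) ∧ Function.Bijective (fun x => mul x a))
    {z : A} (hz : z ∈ rightNucleusSub mul) (hz0 : z ≠ 0) :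
    ∃ v ∈ rightNucleusSub mul, mul z v = one ∧ mul v z = one := by
  obtain ⟨v, hv⟩ := (hdiv z hz0).1.2 one
  simp only at hv
  have hvz : mul v z = one := by
    have : (fun x => mul z x) (mul v z) = (fun x => mul z x) one := by
      simp only
      rw [(hone z).2, ← hz z v, hv, (hone z).1]
    exact (hdiv z hz0).1.1 this
  refine ⟨v, ?_, hv, hvz⟩
  intro x y
  have : (fun t => mul t z) (mul (mul x y) v) = (fun t => mul t z) (mul x (mul y v)) := by
    simp only
    rw [hz (mul x y) v, hvz, (hone (mul x y)).2, hz x (mul y v), hz y v, hvz, (hone y).2]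
  exact (hdiv z hz0).2.1 this

lemma rns_finrank_le [FiniteDimensional k A] (h4 : finrank k A = 4)
    (hone : ∀ x : A, mul one x = x ∧ mul x one = x)
    (hdiv : ∀ a : A, a ≠ 0 →
      Function.Bijective (fun x => mul a x) ∧ Function.Bijective (fun x => mul x a))
    (hna : ¬ ∀ x y z : A, mul (mul x y) z = mul x (mul y z)) :
    finrank k (rightNucleusSub mul) ≤ 2 := by
  have hu : ∃ u : A, u ∉ rightNucleusSub mul := by
    by_contra h
    push_neg at h
    exact hna fun x y z => h z x y
  obtain ⟨u, hu⟩ := hu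
  have hu0 : u ≠ 0 := fun h => hu (h ▸ (rightNucleusSub mul).zero_mem)
  have hinj : Function.Injective (mul u) := (hdiv u hu0).1.1
  set N := rightNucleusSub mul with hN
  set T := N.map (mul u) with hT
  have hrank : finrank k T = finrank k N :=
    (Submodule.equivMapOfInjective (mul u) hinj N).finrank_eq.symm
  have hdisj : N ⊓ T = ⊥ := by
    rw [eq_bot_iff]
    rintro w ⟨hwN, z, hzN, rfl⟩
    rcases eq_or_ne z 0 with rfl | hz0
    · simp
    · exfalso
      obtain ⟨v, hvN, hzv, _⟩ := rns_inv hone hdiv hzN hz0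
      have : mul (mul u z) v = u := by
        rw [hvN u z, hzv, (hone u).2]
      exact hu (this ▸ rns_mul_mem hwN hvN)
  have h1 := Submodule.finrank_sup_add_finrank_inf_eq N T
  rw [hdisj, finrank_bot, hrank] at h1
  have h2 : finrank k ↥(N ⊔ T) ≤ 4 := h4 ▸ Submodule.finrank_le _
  omega

end Aux

section Center

variable {A : Type} [AddCommGroup A] [Module k A]
variable {mul : A →ₗ[k] A →ₗ[k] A} {one : A}

def centerSub (mul : A →ₗ[k] A →ₗ[k] A) : Submodule k A where
  carrier := {z | ∀ x : A, mul z x = mul x z}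
  add_mem' := by
    intro a b ha hb x
    simp only [map_add, LinearMap.add_apply]
    rw [ha x, hb x]
  zero_mem' := by
    intro x
    simp only [map_zero, LinearMap.zero_apply]
  smul_mem' := by
    intro t z hz x
    simp only [map_smul, LinearMap.smul_apply]
    rw [hz x]

lemma center_eq [FiniteDimensional k A] (h4 : finrank k A = 4)
    (hone : ∀ x : A, mul one x = x ∧ mul x one = x)
    (hdiv : ∀ a : A, a ≠ 0 →
      Function.Bijective (fun x => mul a x) ∧ Function.Bijective (fun x => mul x a))
    (hassoc : ∀ x y z : A, mul (mul x y) z = mul x (mul y z))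
    (hnc : ¬ ∀ x y : A, mul x y = mul y x) :
    {z : A | ∀ x : A, mul z x = mul x z} = Set.range (fun s : k => s • one) := by
  have hone0 : one ≠ 0 := by
    intro h
    apply hnc
    intro x y
    have hx : x = 0 := by have := (hone x).2; rwa [h, map_zero, eq_comm] at this
    have hy : y = 0 := by have := (hone y).2; rwa [h, map_zero, eq_comm] at this
    rw [hx, hy]
  set Z := centerSub mul with hZ
  have honeZ : one ∈ Z := fun x => by rw [(hone x).1, (hone x).2]
  -- central elements multiply to central elements
  have hmulZ : ∀ {z w : A}, z ∈ Z → w ∈ Z → mul z w ∈ Z := by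
    intro z w hz hw x
    calc mul (mul z w) x = mul z (mul w x) := hassoc z w x
      _ = mul z (mul x w) := by rw [hw x]
      _ = mul (mul z x) w := (hassoc z x w).symm
      _ = mul (mul x z) w := by rw [hz x]
      _ = mul x (mul z w) := hassoc x z w
  -- inverses of central elements are central
  have hinvZ : ∀ {z : A}, z ∈ Z → z ≠ 0 → ∃ v ∈ Z, mul v z = one := by
    intro z hz hz0
    obtain ⟨v, hv⟩ := (hdiv z hz0).1.2 one
    simp only at hv
    refine ⟨v, ?_, ?_⟩
    · intro x
      apply (hdiv z hz0).1.1
      simp only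
      calc mul z (mul v x) = mul (mul z v) x := (hassoc z v x).symm
        _ = mul one x := by rw [hv]
        _ = x := (hone x).1
        _ = mul x one := ((hone x).2).symm
        _ = mul x (mul z v) := by rw [hv]
        _ = mul (mul x z) v := (hassoc x z v).symm
        _ = mul (mul z x) v := by rw [hz x]
        _ = mul z (mul x v) := hassoc z x v
    · apply (hdiv z hz0).1.1
      simp only
      calc mul z (mul v z) = mul (mul z v) z := (hassoc z v z).symm
        _ = mul one z := by rw [hv]
        _ = z := (hone z).1
        _ = mul z one := ((hone z).2).symm
  -- pick a non-central element
  obtain ⟨x0, y0, hx0y0⟩ : ∃ x y : A, mul x y ≠ mul y x := by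
    by_contra h; push_neg at h; exact hnc fun x y => h x y
  have hu : x0 ∉ Z := fun h => hx0y0 (h y0)
  have hu0 : x0 ≠ 0 := fun h => hu (h ▸ Z.zero_mem)
  set u := x0 with hudef
  have hinj : Function.Injective (mul.flip u) := by
    have := (hdiv u hu0).2.1
    exact this
  set T := Z.map (mul.flip u) with hT
  have hrank : finrank k T = finrank k Z :=
    (Submodule.equivMapOfInjective (mul.flip u) hinj Z).finrank_eq.symm
  have hdisj : Z ⊓ T = ⊥ := by
    rw [eq_bot_iff]
    rintro w ⟨hwZ, z, hzZ, rfl⟩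
    rcases eq_or_ne z 0 with rfl | hz0
    · simp
    · exfalso
      obtain ⟨v, hvZ, hvz⟩ := hinvZ hzZ hz0
      have : mul v (mul.flip u z) = u := by
        simp only [LinearMap.flip_apply]
        calc mul v (mul z u) = mul (mul v z) u := (hassoc v z u).symm
          _ = mul one u := by rw [hvz]
          _ = u := (hone u).1
      exact hu (this ▸ hmulZ hvZ hwZ)
  have h1 := Submodule.finrank_sup_add_finrank_inf_eq Z T
  rw [hdisj, finrank_bot, hrank] at h1
  have h2 : finrank k ↥(Z ⊔ T) ≤ 4 := h4 ▸ Submodule.finrank_le _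
  have hge1 : 1 ≤ finrank k Z := by
    have : (Submodule.span k {one}) ≤ Z := by
      rw [Submodule.span_le, Set.singleton_subset_iff]; exact honeZ
    have h1' : finrank k (Submodule.span k ({one} : Set A)) = 1 := finrank_span_singleton hone0
    calc 1 = finrank k (Submodule.span k ({one} : Set A)) := h1'.symm
      _ ≤ finrank k Z := Submodule.finrank_mono this
  -- rule out finrank Z = 2
  have hne2 : finrank k Z ≠ 2 := by
    intro h2'
    apply hnc
    have htop : Z ⊔ T = ⊤ := by
      apply Submodule.eq_top_of_finrank_eq
      omega
    -- every element decomposes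
    intro x y
    obtain ⟨z1, hz1, t1, ht1, hx⟩ := Submodule.mem_sup.1 (htop ▸ Submodule.mem_top (x := x))
    obtain ⟨z2, hz2, t2, ht2, hy⟩ := Submodule.mem_sup.1 (htop ▸ Submodule.mem_top (x := y))
    obtain ⟨w1, hw1, rfl⟩ := ht1
    obtain ⟨w2, hw2, rfl⟩ := ht2
    simp only [LinearMap.flip_apply] at hx hy
    have key : ∀ {a b : A}, a ∈ Z → b ∈ Z →
        mul (mul a u) (mul b u) = mul (mul a b) (mul u u) := by
      intro a b ha hb
      calc mul (mul a u) (mul b u) = mul a (mul u (mul b u)) := hassoc a u (mul b u)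
        _ = mul a (mul (mul u b) u) := by rw [hassoc u b u]
        _ = mul a (mul (mul b u) u) := by rw [hb u]
        _ = mul a (mul b (mul u u)) := by rw [hassoc b u u]
        _ = mul (mul a b) (mul u u) := (hassoc a b (mul u u)).symm
    rw [← hx, ← hy]
    simp only [map_add, LinearMap.add_apply]
    rw [key hw1 hw2, key hw2 hw1, hz1 z2, hz1 (mul w2 u), hz2 (mul w1 u), hw1 w2]
    abel
  -- hence finrank Z = 1 and Z = span {one}
  have heq : Submodule.span k ({one} : Set A) = Z := by
    apply Submodule.eq_of_le_of_finrank_le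
    · rw [Submodule.span_le, Set.singleton_subset_iff]; exact honeZ
    · rw [finrank_span_singleton hone0]; omega
  have : {z : A | ∀ x : A, mul z x = mul x z} = (Z : Set A) := rfl
  rw [this, ← heq]
  ext w
  simp only [SetLike.mem_coe, Submodule.mem_span_singleton, Set.mem_range]

end Center

/-- Let `k` be any field and `A ∈ 𝒞(k)`. Then exactly one of the following
holds: (a) `A` is not associative; (b) `A` is associative, non-commutative, with center `k·1`;
(c) `A` is commutative and associative. Moreover, `A` is not associative if and only if the
right nucleus has dimension 2 over `k`. -/
theorem C_trichotomy
    (A : Type) [AddCommGroup A] [Module k A] [FiniteDimensional k A]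
    (mul : A →ₗ[k] A →ₗ[k] A) (one : A)
    (h4 : finrank k A = 4)
    (hone : ∀ x : A, mul one x = x ∧ mul x one = x)
    (hdiv : ∀ a : A, a ≠ 0 →
      Function.Bijective (fun x => mul a x) ∧ Function.Bijective (fun x => mul x a))
    (hproper : Set.range (fun s : k => s • one) ⊂ (rightNucleusSub mul : Set A))
    (hkl : ∃ α β : A ≃ₗ[k] A, IsKleinPair mul α β) :
    (((¬ ∀ x y z : A, mul (mul x y) z = mul x (mul y z)) ∨
      ((∀ x y z : A, mul (mul x y) z = mul x (mul y z)) ∧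
        (¬ ∀ x y : A, mul x y = mul y x) ∧
        {z : A | ∀ x : A, mul z x = mul x z} = Set.range (fun s : k => s • one)) ∨
      ((∀ x y : A, mul x y = mul y x) ∧
        (∀ x y z : A, mul (mul x y) z = mul x (mul y z)))) ∧
     ¬((¬ ∀ x y z : A, mul (mul x y) z = mul x (mul y z)) ∧
       ((∀ x y z : A, mul (mul x y) z = mul x (mul y z)) ∧
         (¬ ∀ x y : A, mul x y = mul y x) ∧
         {z : A | ∀ x : A, mul z x = mul x z} = Set.range (fun s : k => s • one))) ∧
     ¬((¬ ∀ x y z : A, mul (mul x y) z = mul x (mul y z)) ∧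
       ((∀ x y : A, mul x y = mul y x) ∧
         (∀ x y z : A, mul (mul x y) z = mul x (mul y z)))) ∧
     ¬(((∀ x y z : A, mul (mul x y) z = mul x (mul y z)) ∧
         (¬ ∀ x y : A, mul x y = mul y x) ∧
         {z : A | ∀ x : A, mul z x = mul x z} = Set.range (fun s : k => s • one)) ∧
       ((∀ x y : A, mul x y = mul y x) ∧
         (∀ x y z : A, mul (mul x y) z = mul x (mul y z))))) ∧
    ((¬ ∀ x y z : A, mul (mul x y) z = mul x (mul y z)) ↔
      finrank k ↥(rightNucleusSub mul) = 2) := by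

  have hone0 : one ≠ 0 := by
    intro h
    have hz : ∀ x : A, x = 0 := fun x => by
      have := (hone x).2; rwa [h, map_zero, eq_comm] at this
    have : Subsingleton A := ⟨fun a b => by rw [hz a, hz b]⟩
    rw [Module.finrank_zero_of_subsingleton] at h4
    omega
  have hspan : (↑(Submodule.span k ({one} : Set A)) : Set A) =
      Set.range (fun s : k => s • one) := by
    ext w
    simp only [SetLike.mem_coe, Submodule.mem_span_singleton, Set.mem_range]
  have hlt : Submodule.span k ({one} : Set A) < rightNucleusSub mul := by
    rw [← SetLike.coe_ssubset_coe, hspan]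
    exact hproper
  have hge2 : 2 ≤ finrank k (rightNucleusSub mul) := by
    have := Submodule.finrank_lt_finrank_of_lt hlt
    rw [finrank_span_singleton hone0] at this
    omega
  have hiff : (¬ ∀ x y z : A, mul (mul x y) z = mul x (mul y z)) ↔
      finrank k ↥(rightNucleusSub mul) = 2 := by
    constructor
    · intro hna
      have := rns_finrank_le h4 hone hdiv hna
      omega
    · intro h2 hassoc
      have htop : rightNucleusSub mul = ⊤ := by
        rw [eq_top_iff]
        intro z _ x y
        exact hassoc x y z
      rw [htop, finrank_top, h4] at h2
      omega
  refine ⟨⟨?_, ?_, ?_, ?_⟩, hiff⟩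
  · by_cases hP : ∀ x y z : A, mul (mul x y) z = mul x (mul y z)
    · by_cases hQ : ∀ x y : A, mul x y = mul y x
      · exact Or.inr (Or.inr ⟨hQ, hP⟩)
      · exact Or.inr (Or.inl ⟨hP, hQ, center_eq h4 hone hdiv hP hQ⟩)
    · exact Or.inl hP
  · rintro ⟨hna, ha, _⟩; exact hna ha
  · rintro ⟨hna, _, ha⟩; exact hna ha
  · rintro ⟨⟨_, hnc, _⟩, hc, _⟩; exact hnc hc
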